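/- Let C be a nonnegative square matrix indexed by a finite set I, and let m be a pseudo-metric on I. Suppose max_{i∈I} Σ_{j∈I} e^{m(i,j)} C_{ij} ≤ d < 1. Then the matrix D = Σ_{n=0}^∞ C^n = (I − C)^{-1} satisfies max_{i∈I} Σ_{j∈I} e^{m(i,j)} D_{ij} ≤ 1/(1−d). -/

import Mathlib

open Finset
open scoped NNReal

theorem weighted_neumann_bound {I : Type*} [Fintype I] [DecidableEq I] [Nonempty I]
    (C : Matrix I I ℝ) (hCnn : ∀ i j, 0 ≤ C i j)
    (m : I → I → ℝ)
    (hm0 : ∀ i, m i i = 0) (hmsymm : ∀ i j, m i j = m j i)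
    (hmtri : ∀ i j k, m i k ≤ m i j + m j k) (hmnn : ∀ i j, 0 ≤ m i j)
    (d : ℝ) (hd : d < 1)
    (hrow : (Finset.univ.sup' Finset.univ_nonempty fun i => ∑ j, Real.exp (m i j) * C i j) ≤ d) :
    HasSum (fun n : ℕ => C ^ n) (1 - C)⁻¹ ∧
    (Finset.univ.sup' Finset.univ_nonempty fun i => ∑ j, Real.exp (m i j) * ((1 - C)⁻¹) i j)
      ≤ 1 / (1 - d) := by
  classical
  -- d is nonnegative
  obtain ⟨i₀⟩ := ‹Nonempty I›
  have hd0 : 0 ≤ d := by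
    refine le_trans ?_ (le_trans (Finset.le_sup' (fun i => ∑ j, Real.exp (m i j) * C i j) (Finset.mem_univ i₀)) hrow)
    exact Finset.sum_nonneg fun j _ => mul_nonneg (Real.exp_pos _).le (hCnn i₀ j)
  -- entries of powers are nonnegative
  have hpow_nn : ∀ n : ℕ, ∀ i j, 0 ≤ (C ^ n) i j := by
    intro n
    induction n with
    | zero => intro i j; simp [Matrix.one_apply]; positivity
    | succ n ih =>
      intro i j
      rw [pow_succ, Matrix.mul_apply]
      exact Finset.sum_nonneg fun k _ => mul_nonneg (ih i k) (hCnn k j)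
  have hrow' : ∀ i, ∑ j, Real.exp (m i j) * C i j ≤ d := fun i =>
    le_trans (Finset.le_sup' (fun i => ∑ j, Real.exp (m i j) * C i j) (Finset.mem_univ i)) hrow
  -- key estimate
  have key : ∀ n : ℕ, ∀ i, ∑ j, Real.exp (m i j) * (C ^ n) i j ≤ d ^ n := by
    intro n
    induction n with
    | zero =>
      intro i
      simp only [pow_zero, Matrix.one_apply]
      rw [Finset.sum_eq_single i]
      · simp [hm0 i]
      · intro b _ hb; simp [hb.symm]
      · simp
    | succ n ih =>
      intro i
      have : ∑ j, Real.exp (m i j) * (C ^ (n + 1)) i j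
          ≤ ∑ k, Real.exp (m i k) * C i k * (∑ j, Real.exp (m k j) * (C ^ n) k j) := by
        calc ∑ j, Real.exp (m i j) * (C ^ (n + 1)) i j
            = ∑ j, ∑ k, Real.exp (m i j) * (C i k * (C ^ n) k j) := by
              simp only [pow_succ', Matrix.mul_apply, Finset.mul_sum]
          _ = ∑ k, ∑ j, Real.exp (m i j) * (C i k * (C ^ n) k j) := Finset.sum_comm
          _ ≤ ∑ k, ∑ j, Real.exp (m i k) * C i k * (Real.exp (m k j) * (C ^ n) k j) := by
              refine Finset.sum_le_sum fun k _ => Finset.sum_le_sum fun j _ => ?_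
              have hexp : Real.exp (m i j) ≤ Real.exp (m i k) * Real.exp (m k j) := by
                rw [← Real.exp_add]
                exact Real.exp_le_exp.mpr (hmtri i k j)
              have h1 : (0:ℝ) ≤ C i k * (C ^ n) k j :=
                mul_nonneg (hCnn i k) (hpow_nn n k j)
              calc Real.exp (m i j) * (C i k * (C ^ n) k j)
                  ≤ Real.exp (m i k) * Real.exp (m k j) * (C i k * (C ^ n) k j) :=
                    mul_le_mul_of_nonneg_right hexp h1
                _ = Real.exp (m i k) * C i k * (Real.exp (m k j) * (C ^ n) k j) := by ring
          _ = ∑ k, Real.exp (m i k) * C i k * (∑ j, Real.exp (m k j) * (C ^ n) k j) := by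
              simp [Finset.mul_sum]
      refine this.trans ?_
      calc ∑ k, Real.exp (m i k) * C i k * (∑ j, Real.exp (m k j) * (C ^ n) k j)
          ≤ ∑ k, Real.exp (m i k) * C i k * d ^ n := by
            refine Finset.sum_le_sum fun k _ => ?_
            exact mul_le_mul_of_nonneg_left (ih k)
              (mul_nonneg (Real.exp_pos _).le (hCnn i k))
        _ = (∑ k, Real.exp (m i k) * C i k) * d ^ n := by rw [← Finset.sum_mul]
        _ ≤ d * d ^ n := mul_le_mul_of_nonneg_right (hrow' i) (pow_nonneg hd0 n)
        _ = d ^ (n + 1) := (pow_succ' d n).symm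
  -- norm bound: set up the L∞-operator norm
  letI : NormedRing (Matrix I I ℝ) := Matrix.linftyOpNormedRing
  letI : NormOneClass (Matrix I I ℝ) := Matrix.linfty_opNormOneClass
  haveI : HasSummableGeomSeries (Matrix I I ℝ) := by
    constructor
    intro x hx
    have h1 : Summable fun n : ℕ ↦ ‖x‖ ^ n := summable_geometric_of_lt_one (norm_nonneg _) hx
    letI : NormedSpace ℝ (Matrix I I ℝ) := Matrix.linftyOpNormedSpace
    haveI : CompleteSpace (Matrix I I ℝ) := FiniteDimensional.complete ℝ _
    exact h1.of_norm_bounded_eventually_nat (eventually_norm_pow_le x)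
  have hC_norm : ‖C‖ < 1 := by
    rw [Matrix.linfty_opNorm_def]
    have : ∀ i, (∑ j, (‖C i j‖₊ : ℝ)) ≤ d := by
      intro i
      refine le_trans ?_ (hrow' i)
      refine Finset.sum_le_sum fun j _ => ?_
      rw [coe_nnnorm, Real.norm_eq_abs, abs_of_nonneg (hCnn i j)]
      nth_rewrite 1 [← one_mul (C i j)]
      exact mul_le_mul_of_nonneg_right (Real.one_le_exp (hmnn i j)) (hCnn i j)
    have h2 : ((Finset.univ.sup fun i => ∑ j, ‖C i j‖₊ : ℝ≥0) : ℝ) ≤ d := by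
      rw [← Finset.sup'_eq_sup (Finset.univ_nonempty (α := I)),
        Finset.comp_sup'_eq_sup'_comp _ (fun x : ℝ≥0 => (x : ℝ))
          (fun x y => by simp [NNReal.coe_max])]
      refine Finset.sup'_le _ _ fun b _ => ?_
      refine le_trans (le_of_eq ?_) (this b)
      simp [Function.comp, NNReal.coe_sum]
    calc ((Finset.univ.sup fun i => ∑ j, ‖C i j‖₊ : ℝ≥0) : ℝ) ≤ d := h2
      _ < 1 := hd
  have hsummable : Summable (fun n : ℕ => C ^ n) := summable_geometric_of_norm_lt_one hC_norm
  set S : Matrix I I ℝ := ∑' n : ℕ, C ^ n with hS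
  have hhs : HasSum (fun n : ℕ => C ^ n) S := hsummable.hasSum
  have hinv : (1 - C)⁻¹ = S := by
    have h1 : (1 - C) * S = 1 := mul_neg_geom_series C hC_norm
    exact Matrix.inv_eq_right_inv h1
  -- entrywise sums
  have hentry : ∀ i j, HasSum (fun n : ℕ => (C ^ n) i j) (S i j) := by
    intro i j
    have h1 : HasSum (fun n : ℕ => (C ^ n) i) (S i) := by
      exact hhs.map (Pi.evalAddMonoidHom _ i) (by exact continuous_apply i)
    exact h1.map (Pi.evalAddMonoidHom _ j) (by exact continuous_apply j)
  refine ⟨hinv ▸ hhs, ?_⟩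
  rw [hinv]
  have hgd : Summable (fun n : ℕ => d ^ n) := summable_geometric_of_lt_one hd0 hd
  refine Finset.sup'_le _ _ fun i _ => ?_
  have hsum_j : ∀ j, HasSum (fun n : ℕ => Real.exp (m i j) * (C ^ n) i j)
      (Real.exp (m i j) * S i j) := fun j => (hentry i j).mul_left _
  have hrow_tsum : ∑ j, Real.exp (m i j) * S i j
      = ∑' n : ℕ, ∑ j, Real.exp (m i j) * (C ^ n) i j := by
    calc ∑ j, Real.exp (m i j) * S i j
        = ∑ j, ∑' n : ℕ, Real.exp (m i j) * (C ^ n) i j :=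
          Finset.sum_congr rfl fun j _ => (hsum_j j).tsum_eq.symm
      _ = ∑' n : ℕ, ∑ j, Real.exp (m i j) * (C ^ n) i j :=
          (Summable.tsum_finsetSum fun j _ => (hsum_j j).summable).symm
  rw [hrow_tsum]
  calc (∑' n : ℕ, ∑ j, Real.exp (m i j) * (C ^ n) i j)
      ≤ ∑' n : ℕ, d ^ n := by
        refine Summable.tsum_le_tsum (fun n => key n i) ?_ hgd
        exact (hasSum_sum (fun j _ => hsum_j j)).summable
    _ = (1 - d)⁻¹ := tsum_geometric_of_lt_one hd0 hd
    _ = 1 / (1 - d) := (one_div _).symm
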